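/- Let f : [a,b] → ℂ be Lebesgue integrable, α, β ∈ ℝ with α² + β² = 1, and K ≥ 1 such that |f(t)| ≤ K(α · Re f(t) + β · Im f(t)) for a.e. t ∈ [a,b]. Then ∫ₐᵇ |f(t)| dt ≤ K |∫ₐᵇ f(t) dt|. -/

import Mathlib

open MeasureTheory

theorem stmt_11 {a b : ℝ} {f : ℝ → ℂ} (hf : IntegrableOn f (Set.Icc a b))
    {α β : ℝ} (hαβ : α ^ 2 + β ^ 2 = 1) {K : ℝ} (hK : 1 ≤ K)
    (h : ∀ᵐ t ∂(volume.restrict (Set.Icc a b)),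
      ‖f t‖ ≤ K * (α * (f t).re + β * (f t).im)) :
    ∫ t in Set.Icc a b, ‖f t‖ ≤ K * ‖∫ t in Set.Icc a b, f t‖ := by
  set I := ∫ t in Set.Icc a b, f t with hI
  have hre : Integrable (fun t => (f t).re) (volume.restrict (Set.Icc a b)) := hf.re
  have him : Integrable (fun t => (f t).im) (volume.restrict (Set.Icc a b)) := hf.im
  have hrhs : Integrable (fun t => K * (α * (f t).re + β * (f t).im))
      (volume.restrict (Set.Icc a b)) := (((hre.const_mul α).add (him.const_mul β)).const_mul K)
  have h1 : ∫ t in Set.Icc a b, ‖f t‖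
      ≤ ∫ t in Set.Icc a b, K * (α * (f t).re + β * (f t).im) := by
    refine integral_mono_ae ?_ hrhs h
    simpa using hf.norm
  have h2 : ∫ t in Set.Icc a b, K * (α * (f t).re + β * (f t).im)
      = K * (α * I.re + β * I.im) := by
    rw [integral_const_mul]
    congr 1
    rw [integral_add (hre.const_mul α) (him.const_mul β), integral_const_mul, integral_const_mul,
      hI]
    simp only [← RCLike.re_eq_complex_re, ← RCLike.im_eq_complex_im, integral_re hf,
      integral_im hf]
  have h3 : α * I.re + β * I.im ≤ ‖I‖ := by
    have habs : ‖I‖ = Real.sqrt (I.re ^ 2 + I.im ^ 2) := by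
      rw [Complex.norm_def, Complex.normSq_apply]; ring_nf
    have h4 : (0:ℝ) ≤ I.re ^ 2 + I.im ^ 2 := by positivity
    nlinarith [Real.sq_sqrt h4, Real.sqrt_nonneg (I.re ^ 2 + I.im ^ 2),
      sq_nonneg (α * I.im - β * I.re), sq_nonneg (α * I.re + β * I.im - Real.sqrt (I.re ^ 2 + I.im ^ 2))]
  calc ∫ t in Set.Icc a b, ‖f t‖ ≤ K * (α * I.re + β * I.im) := h1.trans_eq h2
    _ ≤ K * ‖I‖ := by nlinarith
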